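/- Let q > 1 be real and define b_i := (−1)^i / ∏_{j=1}^{i}(q^j − 1) and μ_i := b_i q^i for i ≥ 0. Then: (i) for every real m < −1, Σ_{i=0}^{∞} |μ_i|² q^{i² + mi} < ∞; (ii) the entire function f(z) := Σ_{i=0}^{∞} μ_i z^i equals ∏_{k=0}^{∞}(1 − q^{−k} z) for all z ∈ ℂ, and in particular f(q^k) = 0 for every integer k ≥ 0; (iii) f is not identically zero, since μ_0 = 1. Hence the vanishing lemma for power series with Σ|μ_i|² q^{i²+mi} < ∞ fails for every m < −1. -/

import Mathlib

noncomputable section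

/-- `b_i = (−1)^i / ∏_{j=1}^{i}(q^j − 1)`. -/
def bCoef (q : ℝ) (i : ℕ) : ℝ := (-1) ^ i / ∏ j ∈ Finset.range i, (q ^ (j + 1) - 1)

/-- `μ_i = b_i·q^i`. -/
def muCoef (q : ℝ) (i : ℕ) : ℝ := bCoef q i * q ^ i

open Filter Finset Topology

section aux
variable {q : ℝ} (hq : 1 < q)

lemma mu_zero (q : ℝ) : muCoef q 0 = 1 := by simp [muCoef, bCoef]

lemma mu_succ (q : ℝ) (i : ℕ) :
    muCoef q (i + 1) = muCoef q i * (-q / (q ^ (i + 1) - 1)) := by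
  simp only [muCoef, bCoef, Finset.prod_range_succ, pow_succ, div_eq_mul_inv, mul_inv]
  ring

include hq

lemma pow_sub_one_pos (i : ℕ) : 0 < q ^ (i + 1) - 1 := by
  have : 1 < q ^ (i + 1) := one_lt_pow₀ hq (Nat.succ_ne_zero i)
  linarith

lemma mu_ne_zero (i : ℕ) : muCoef q i ≠ 0 := by
  induction i with
  | zero => simp [mu_zero]
  | succ n ih =>
    rw [mu_succ]
    refine mul_ne_zero ih (div_ne_zero ?_ (ne_of_gt (pow_sub_one_pos hq n)))
    intro h; rw [neg_eq_zero] at h; linarith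

lemma abs_mu_succ (i : ℕ) :
    |muCoef q (i + 1)| = |muCoef q i| * (q / (q ^ (i + 1) - 1)) := by
  rw [mu_succ, abs_mul, abs_div, abs_neg, abs_of_pos (by linarith : (0:ℝ) < q),
    abs_of_pos (pow_sub_one_pos hq i)]

end aux

section sum
variable {q : ℝ} (hq : 1 < q)
include hq

lemma tendsto_qpow : Tendsto (fun i : ℕ => q ^ (i + 1)) atTop atTop :=
  (tendsto_pow_atTop_atTop_of_one_lt hq).comp (tendsto_add_atTop_nat 1)

lemma summable_abs_mu_pow (r : ℝ) (hr : 0 ≤ r) :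
    Summable fun i : ℕ => |muCoef q i| * r ^ i := by
  refine summable_of_ratio_norm_eventually_le (by norm_num : (1:ℝ)/2 < 1) ?_
  filter_upwards [(tendsto_qpow hq).eventually_ge_atTop (2 * q * r + 1)] with i hi
  have h1 := pow_sub_one_pos hq i
  have hmu : (0:ℝ) ≤ |muCoef q i| := abs_nonneg _
  simp only [Real.norm_eq_abs, abs_mul, abs_abs, abs_pow, abs_of_nonneg hr]
  rw [abs_mu_succ hq, pow_succ]
  have key : q / (q ^ (i + 1) - 1) * r ≤ 1 / 2 := by
    rw [div_mul_eq_mul_div, div_le_div_iff₀ h1 (by norm_num)]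
    nlinarith
  calc |muCoef q i| * (q / (q ^ (i + 1) - 1)) * (r ^ i * r)
      = (q / (q ^ (i + 1) - 1) * r) * (|muCoef q i| * r ^ i) := by ring
    _ ≤ 1 / 2 * (|muCoef q i| * r ^ i) := by
        apply mul_le_mul_of_nonneg_right key (by positivity)

lemma summable_mu_pow (z : ℂ) :
    Summable fun i : ℕ => (muCoef q i : ℂ) * z ^ i := by
  refine Summable.of_norm ?_
  have : ∀ i : ℕ, ‖(muCoef q i : ℂ) * z ^ i‖ = |muCoef q i| * ‖z‖ ^ i := by
    intro i; rw [norm_mul, norm_pow, Complex.norm_real, Real.norm_eq_abs]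
  rw [funext this]
  exact summable_abs_mu_pow hq _ (norm_nonneg z)

end sum

/-- the entire function -/
def fFun (q : ℝ) (z : ℂ) : ℂ := ∑' i : ℕ, (muCoef q i : ℂ) * z ^ i

section funeq
variable {q : ℝ} (hq : 1 < q)
include hq

lemma qC_ne : (q : ℂ) ≠ 0 := by
  simp only [ne_eq, Complex.ofReal_eq_zero]; linarith

lemma qC_pow_sub_one_ne (i : ℕ) : (q : ℂ) ^ (i + 1) - 1 ≠ 0 := by
  have h := pow_sub_one_pos hq i
  intro h0
  have : ((q ^ (i + 1) - 1 : ℝ) : ℂ) = 0 := by push_cast; rw [← h0]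
  rw [Complex.ofReal_eq_zero] at this; linarith

lemma muC_succ (i : ℕ) :
    (muCoef q (i + 1) : ℂ) = (muCoef q i : ℂ) * (-(q:ℂ) / ((q:ℂ) ^ (i + 1) - 1)) := by
  rw [mu_succ]; push_cast; ring

lemma fFun_funeq (z : ℂ) : fFun q z = (1 - z) * fFun q (z / q) := by
  classical
  set g : ℕ → ℂ := fun i => (muCoef q i : ℂ) * (z / q) ^ i with hg
  have hsg : Summable g := summable_mu_pow hq _
  set h : ℕ → ℂ := fun j => match j with
    | 0 => 0
    | (j + 1) => (muCoef q j : ℂ) * (z / q) ^ j * z with hh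
  have hsh : Summable h := by
    rw [← summable_nat_add_iff 1]
    exact hsg.mul_right z
  have hzf : z * fFun q (z / q) = ∑' j, h j := by
    rw [Summable.tsum_eq_zero_add hsh]
    show z * fFun q (z / q) = 0 + ∑' j, (muCoef q j : ℂ) * (z / q) ^ j * z
    rw [zero_add, tsum_mul_right, fFun, mul_comm]
  have key : ∀ j : ℕ, (muCoef q j : ℂ) * z ^ j = g j - h j := by
    intro j
    match j with
    | 0 => simp [hg, hh]
    | (j + 1) =>
      show (muCoef q (j+1) : ℂ) * z ^ (j+1)
          = (muCoef q (j+1) : ℂ) * (z / q) ^ (j+1) - (muCoef q j : ℂ) * (z / q) ^ j * z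
      rw [muC_succ hq]
      have h1 : (q : ℂ) ≠ 0 := qC_ne hq
      have h2 : (q : ℂ) ^ (j + 1) - 1 ≠ 0 := qC_pow_sub_one_ne hq j
      rw [div_pow, div_pow]
      field_simp
      ring
  calc fFun q z = ∑' j, (g j - h j) := tsum_congr key
    _ = fFun q (z / q) - z * fFun q (z / q) := by rw [Summable.tsum_sub hsg hsh, hzf]; rfl
    _ = (1 - z) * fFun q (z / q) := by ring

lemma fFun_prod (z : ℂ) (N : ℕ) :
    fFun q z = (∏ k ∈ Finset.range N, (1 - ((q:ℂ) ^ k)⁻¹ * z)) * fFun q (z / (q:ℂ) ^ N) := by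
  induction N with
  | zero => simp
  | succ n ih =>
    rw [Finset.prod_range_succ, ih, fFun_funeq hq (z / (q:ℂ) ^ n)]
    rw [div_div, ← pow_succ, div_eq_inv_mul]
    ring

lemma fFun_near_one {w : ℂ} (hw : ‖w‖ ≤ 1) :
    ‖fFun q w - 1‖ ≤ (∑' i : ℕ, |muCoef q (i + 1)|) * ‖w‖ := by
  have hsum := summable_mu_pow hq (q := q) w
  have habs : Summable fun i : ℕ => |muCoef q i| * ‖w‖ ^ i :=
    summable_abs_mu_pow hq _ (norm_nonneg w)
  have habs1 : Summable fun i : ℕ => |muCoef q (i + 1)| := by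
    have h' : Summable fun i : ℕ => |muCoef q i| :=
      (summable_abs_mu_pow hq 1 zero_le_one).congr (by simp)
    exact (summable_nat_add_iff 1).mpr h'
  have h0 : fFun q w - 1 = ∑' i : ℕ, (muCoef q (i + 1) : ℂ) * w ^ (i + 1) := by
    rw [fFun, Summable.tsum_eq_zero_add hsum, mu_zero]
    push_cast
    ring_nf
  rw [h0]
  have hbn : Summable fun i : ℕ => ‖(muCoef q (i + 1) : ℂ) * w ^ (i + 1)‖ := by
    apply Summable.of_nonneg_of_le (fun i => norm_nonneg _)
      (fun i => ?_) (habs1.mul_right ‖w‖)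
    rw [norm_mul, norm_pow, Complex.norm_real, Real.norm_eq_abs, pow_succ]
    have h1 : ‖w‖ ^ i ≤ 1 := pow_le_one₀ (norm_nonneg w) hw
    calc |muCoef q (i+1)| * (‖w‖ ^ i * ‖w‖) ≤ |muCoef q (i+1)| * (1 * ‖w‖) := by
          apply mul_le_mul_of_nonneg_left
            (mul_le_mul_of_nonneg_right h1 (norm_nonneg w)) (abs_nonneg _)
      _ = |muCoef q (i+1)| * ‖w‖ := by ring
  calc ‖∑' i : ℕ, (muCoef q (i + 1) : ℂ) * w ^ (i + 1)‖
      ≤ ∑' i : ℕ, ‖(muCoef q (i + 1) : ℂ) * w ^ (i + 1)‖ := norm_tsum_le_tsum_norm hbn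
    _ ≤ ∑' i : ℕ, |muCoef q (i + 1)| * ‖w‖ := by
        apply Summable.tsum_le_tsum ?_ hbn (habs1.mul_right ‖w‖)
        intro i
        rw [norm_mul, norm_pow, Complex.norm_real, Real.norm_eq_abs, pow_succ]
        have h1 : ‖w‖ ^ i ≤ 1 := pow_le_one₀ (norm_nonneg w) hw
        nlinarith [abs_nonneg (muCoef q (i+1)), norm_nonneg w,
          mul_le_mul_of_nonneg_right h1 (norm_nonneg w)]
    _ = (∑' i : ℕ, |muCoef q (i + 1)|) * ‖w‖ := tsum_mul_right

lemma tendsto_fFun_one (z : ℂ) :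
    Tendsto (fun N : ℕ => fFun q (z / (q:ℂ) ^ N)) atTop (𝓝 1) := by
  rw [tendsto_iff_norm_sub_tendsto_zero]
  have hnorm : ∀ N : ℕ, ‖z / (q:ℂ) ^ N‖ = ‖z‖ * (1/q) ^ N := by
    intro N
    rw [norm_div, norm_pow, Complex.norm_real, Real.norm_eq_abs,
      abs_of_pos (by linarith : (0:ℝ) < q)]
    rw [div_eq_mul_inv, ← inv_pow, one_div]
  have hto : Tendsto (fun N : ℕ => ‖z‖ * (1/q) ^ N) atTop (𝓝 0) := by
    have := tendsto_pow_atTop_nhds_zero_of_lt_one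
      (le_of_lt (by positivity : (0:ℝ) < 1/q))
      (by rw [div_lt_one (by linarith : (0:ℝ) < q)]; linarith)
    simpa using this.const_mul ‖z‖
  have hev : ∀ᶠ N : ℕ in atTop, ‖z / (q:ℂ) ^ N‖ ≤ 1 := by
    filter_upwards [hto.eventually_le_const (by norm_num : (0:ℝ) < 1)] with N hN
    rw [hnorm]; exact hN
  refine squeeze_zero' (g := fun N : ℕ => (∑' i : ℕ, |muCoef q (i + 1)|) * (‖z‖ * (1/q) ^ N))
    (Eventually.of_forall fun N => norm_nonneg _) ?_ ?_
  · filter_upwards [hev] with N hN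
    calc ‖fFun q (z / (q:ℂ) ^ N) - 1‖
        ≤ (∑' i : ℕ, |muCoef q (i + 1)|) * ‖z / (q:ℂ) ^ N‖ := fFun_near_one hq hN
      _ = (∑' i : ℕ, |muCoef q (i + 1)|) * (‖z‖ * (1/q) ^ N) := by rw [hnorm]
  · simpa using hto.const_mul (∑' i : ℕ, |muCoef q (i + 1)|)

lemma tendsto_partial_prod (z : ℂ) :
    Tendsto (fun N : ℕ => ∏ k ∈ Finset.range N, (1 - ((q:ℂ) ^ k)⁻¹ * z)) atTop
      (𝓝 (fFun q z)) := by
  have h1 := tendsto_fFun_one hq z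
  have hne : ∀ᶠ N : ℕ in atTop, fFun q (z / (q:ℂ) ^ N) ≠ 0 :=
    h1.eventually_ne one_ne_zero
  have heq : (fun N : ℕ => fFun q z * (fFun q (z / (q:ℂ) ^ N))⁻¹)
      =ᶠ[atTop] fun N => ∏ k ∈ Finset.range N, (1 - ((q:ℂ) ^ k)⁻¹ * z) := by
    filter_upwards [hne] with N hN
    rw [fFun_prod hq z N, mul_assoc, mul_inv_cancel₀ hN, mul_one]
  have : Tendsto (fun N : ℕ => fFun q z * (fFun q (z / (q:ℂ) ^ N))⁻¹) atTop
      (𝓝 (fFun q z * 1⁻¹)) := tendsto_const_nhds.mul (h1.inv₀ one_ne_zero)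
  simpa using this.congr' heq

end funeq

section prod
variable {q : ℝ} (hq : 1 < q)
include hq

lemma norm_inv_pow_mul (z : ℂ) (k : ℕ) : ‖((q:ℂ) ^ k)⁻¹ * z‖ = ‖z‖ * (1/q) ^ k := by
  rw [norm_mul, norm_inv, norm_pow, Complex.norm_real, Real.norm_eq_abs,
    abs_of_pos (by linarith : (0:ℝ) < q), ← inv_pow, one_div, mul_comm]

lemma tendsto_norm_inv_pow_mul (z : ℂ) :
    Tendsto (fun k : ℕ => ‖z‖ * (1/q) ^ k) atTop (𝓝 0) := by
  have := tendsto_pow_atTop_nhds_zero_of_lt_one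
    (le_of_lt (by positivity : (0:ℝ) < 1/q))
    (by rw [div_lt_one (by linarith : (0:ℝ) < q)]; linarith)
  simpa using this.const_mul ‖z‖

lemma fFun_eq_zero {z : ℂ} (k : ℕ) (hk : ((q:ℂ) ^ k)⁻¹ * z = 1) : fFun q z = 0 := by
  rw [fFun_prod hq z (k + 1),
    Finset.prod_eq_zero (Finset.self_mem_range_succ k) (by rw [hk, sub_self]), zero_mul]

lemma tprod_eq_fFun (z : ℂ) :
    ∏' k : ℕ, (1 - ((q:ℂ) ^ k)⁻¹ * z) = fFun q z := by
  by_cases hcase : ∃ k : ℕ, ((q:ℂ) ^ k)⁻¹ * z = 1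
  · obtain ⟨k, hk⟩ := hcase
    rw [fFun_eq_zero hq k hk]
    have hp : HasProd (fun k : ℕ => 1 - ((q:ℂ) ^ k)⁻¹ * z) 0 := by
      refine Tendsto.congr' ?_ (tendsto_const_nhds (x := (0:ℂ)))
      rw [EventuallyEq]; refine eventually_atTop.mpr ?_
      exact ⟨{k}, fun s hs => (Finset.prod_eq_zero (Finset.singleton_subset_iff.mp hs)
        (by rw [hk, sub_self])).symm⟩
    exact hp.tprod_eq
  · push_neg at hcase
    have hfn : ∀ n : ℕ, (1 - ((q:ℂ) ^ n)⁻¹ * z) ≠ 0 := by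
      intro n h
      exact hcase n (by linear_combination -h)
    have hlog : Summable fun n : ℕ => Complex.log (1 - ((q:ℂ) ^ n)⁻¹ * z) := by
      refine Summable.of_norm_bounded_eventually_nat
        (g := fun n => 3/2 * (‖z‖ * (1/q) ^ n)) ?_ ?_
      · have hgeo : Summable fun n : ℕ => (1/q) ^ n :=
          summable_geometric_of_lt_one (by positivity)
            (by rw [div_lt_one (by linarith : (0:ℝ) < q)]; linarith)
        exact ((hgeo.mul_left ‖z‖).mul_left (3/2))
      · filter_upwards [(tendsto_norm_inv_pow_mul hq z).eventually_le_const
          (by norm_num : (0:ℝ) < 1/2)] with n hn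
        have h2 : ‖-(((q:ℂ) ^ n)⁻¹ * z)‖ ≤ 1/2 := by
          rw [norm_neg, norm_inv_pow_mul hq]; exact hn
        have := Complex.norm_log_one_add_half_le_self h2
        rw [show (1 : ℂ) + -(((q:ℂ) ^ n)⁻¹ * z) = 1 - ((q:ℂ) ^ n)⁻¹ * z by ring] at this
        rw [norm_neg, norm_inv_pow_mul hq] at this
        exact this
    have hmul : Multipliable fun n : ℕ => 1 - ((q:ℂ) ^ n)⁻¹ * z := by
      have := Complex.multipliable_of_summable_log hlog
      exact this
    exact tendsto_nhds_unique (hmul.hasProd.tendsto_prod_nat) (tendsto_partial_prod hq z)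

end prod

section parti
variable {q : ℝ} (hq : 1 < q)
include hq

lemma summable_part_i (m : ℝ) (hm : m < -1) :
    Summable fun i : ℕ => |muCoef q i| ^ 2 * q ^ ((i : ℝ) ^ 2 + m * (i : ℝ)) := by
  have hq0 : (0:ℝ) < q := by linarith
  set a : ℕ → ℝ := fun i => |muCoef q i| ^ 2 * q ^ ((i : ℝ) ^ 2 + m * (i : ℝ)) with ha
  have hapos : ∀ i, 0 < a i := by
    intro i
    have h1 : 0 < |muCoef q i| := abs_pos.mpr (mu_ne_zero hq i)
    have h2 : (0:ℝ) < q ^ ((i : ℝ) ^ 2 + m * (i : ℝ)) := Real.rpow_pos_of_pos hq0 _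
    positivity
  have hratio : ∀ n : ℕ, a (n + 1) / a n
      = q ^ (1 + m) * (q ^ (n + 1) / (q ^ (n + 1) - 1)) ^ 2 := by
    intro n
    have hsub := pow_sub_one_pos hq n
    have hsub' : q ^ (n + 1) - 1 ≠ 0 := ne_of_gt hsub
    have e1 : q ^ (((n:ℝ) + 1) ^ 2 + m * ((n:ℝ) + 1))
        = q ^ ((n:ℝ) ^ 2 + m * (n:ℝ)) * (q ^ (1 + m) * (q ^ n) ^ 2) := by
      rw [← Real.rpow_natCast q n, ← Real.rpow_natCast (q ^ (n:ℝ)) 2,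
        ← Real.rpow_mul hq0.le, ← Real.rpow_add hq0, ← Real.rpow_add hq0]
      congr 1
      push_cast
      ring
    have e2 : |muCoef q (n + 1)| ^ 2
        = |muCoef q n| ^ 2 * (q / (q ^ (n + 1) - 1)) ^ 2 := by
      rw [abs_mu_succ hq, mul_pow]
    have e3 : (q / (q ^ (n+1) - 1)) ^ 2 * (q ^ n) ^ 2
        = (q ^ (n+1) / (q ^ (n+1) - 1)) ^ 2 := by
      rw [← mul_pow]
      congr 1
      rw [div_mul_eq_mul_div, ← pow_succ']
    have key : a (n + 1) = a n * (q ^ (1 + m) * (q ^ (n+1) / (q ^ (n+1) - 1)) ^ 2) := by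
      rw [ha]
      simp only [Nat.cast_add, Nat.cast_one]
      rw [e1, e2, ← e3]
      ring
    rw [key, mul_comm (a n), mul_div_assoc, div_self (ne_of_gt (hapos n)), mul_one]
  refine summable_of_ratio_test_tendsto_lt_one
    (Real.rpow_lt_one_of_one_lt_of_neg hq (by linarith) : q ^ (1 + m) < 1)
    (Eventually.of_forall fun n => ne_of_gt (hapos n)) ?_
  have hinf : Tendsto (fun n : ℕ => q ^ (n + 1) - 1) atTop atTop := by
    have := tendsto_atTop_add_const_right atTop (-1 : ℝ) (tendsto_qpow hq)
    simpa [sub_eq_add_neg] using this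
  have hinv : Tendsto (fun n : ℕ => (q ^ (n + 1) - 1)⁻¹) atTop (𝓝 0) :=
    tendsto_inv_atTop_zero.comp hinf
  have hg : Tendsto (fun n : ℕ => q ^ (n + 1) / (q ^ (n + 1) - 1)) atTop (𝓝 1) := by
    have h1 : Tendsto (fun n : ℕ => 1 + (q ^ (n + 1) - 1)⁻¹) atTop (𝓝 (1 + 0)) :=
      tendsto_const_nhds.add hinv
    rw [add_zero] at h1
    refine h1.congr fun n => ?_
    have hsub' : q ^ (n + 1) - 1 ≠ 0 := ne_of_gt (pow_sub_one_pos hq n)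
    field_simp
    ring
  have hfinal : Tendsto (fun n : ℕ => q ^ (1 + m) * (q ^ (n + 1) / (q ^ (n + 1) - 1)) ^ 2)
      atTop (𝓝 (q ^ (1 + m))) := by
    have := (hg.pow 2).const_mul (q ^ (1 + m))
    simpa using this
  refine Tendsto.congr (fun n => ?_) hfinal
  rw [← hratio n, Real.norm_eq_abs, Real.norm_eq_abs,
    abs_of_pos (hapos (n + 1)), abs_of_pos (hapos n)]

end parti


/-- With `μ_i = b_i q^i`: (i) `Σ |μ_i|² q^{i²+mi} < ∞` for every `m < −1`;
(ii) `Σ_i μ_i z^i = ∏_{k≥0}(1 − q^{−k}z)` for all `z ∈ ℂ`, so it vanishes at every `q^k`;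
(iii) the function is not identically zero since `μ_0 = 1`.  Hence the vanishing lemma fails
for every `m < −1`. -/
theorem stmt8 (q : ℝ) (hq : 1 < q) :
    (∀ m : ℝ, m < -1 →
      Summable fun i : ℕ => |muCoef q i| ^ 2 * q ^ ((i : ℝ) ^ 2 + m * (i : ℝ))) ∧
    (∀ z : ℂ, ∑' i : ℕ, (muCoef q i : ℂ) * z ^ i = ∏' k : ℕ, (1 - ((q : ℂ) ^ k)⁻¹ * z)) ∧
    (∀ k : ℕ, ∑' i : ℕ, (muCoef q i : ℂ) * ((q : ℂ) ^ k) ^ i = 0) ∧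
    muCoef q 0 = 1 := by
  refine ⟨fun m hm => summable_part_i hq m hm, fun z => (tprod_eq_fFun hq z).symm,
    fun k => ?_, mu_zero q⟩
  exact fFun_eq_zero hq k (inv_mul_cancel₀ (pow_ne_zero k (qC_ne hq)))
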